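/- Let m ≥ 1 and let c := (1+(−1)^m)/2 (so c = 1 if m is even, c = 0 if m is odd). Let T be the quotient of the polynomial ring ℤ[ξ,ζ,h,φ] by the ideal generated by ξζ−1, h^m − 2φ, and φ² − c·h^m·φ (this models ℤ[ξ,ξ⁻¹][h,φ]/𝒞_{2m−1}, the integral cohomology of the complex quadric of dimension 2m−1 with ξ inverted). Let Φ : A → T be the ring homomorphism determined by ε ↦ 0, τ ↦ ξ², σ ↦ ζ², h ↦ h, x ↦ 0. Then the kernel of Φ equals ⟨ε⟩ + J, where J ⊆ A is the ideal generated by τ^m·x − 𝐟_(m−1), 𝐟_m, h·x, and h^(2m). (The Claim in the proof of Theorem 5.4: ker(φ∘Ψ_n) = ⟨ε⟩ + J_n, case n = 2m−1.) -/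

import Mathlib

set_option maxHeartbeats 1000000


/- Context: `A = ℤ[ε,τ,σ,h,x]/(2ε, τσ-1)` models `𝒜[h,x]` where
`𝒜 = ℤ[ε,τ,τ⁻¹]/(2ε)`, and for `m ≥ 0`,
`𝐟_m = ∑_{a+2b=m} C(a+b,b)·ε^(2a+1)·τ^b·h^(2b) ∈ A`. -/

noncomputable section

open MvPolynomial

abbrev Apre : Type := MvPolynomial (Fin 5) ℤ  -- ε, τ, σ, h, x

def AI : Ideal Apre := Ideal.span {2 * X 0, X 1 * X 2 - 1}

abbrev A : Type := Apre ⧸ AI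

def ε : A := Ideal.Quotient.mk AI (X 0)
def τ : A := Ideal.Quotient.mk AI (X 1)
def σ : A := Ideal.Quotient.mk AI (X 2)
def h : A := Ideal.Quotient.mk AI (X 3)
def x : A := Ideal.Quotient.mk AI (X 4)

def f (m : ℕ) : A :=
  ∑ b ∈ Finset.range (m / 2 + 1),
    (Nat.choose (m - b) b : A) * ε ^ (2 * (m - 2 * b) + 1) * τ ^ b * h ^ (2 * b)

/- `T = ℤ[ξ,ζ,h,φ]/(ξζ-1, h^m - 2φ, φ² - c·h^m·φ)` with `c = 1` if `m` even,
`c = 0` if `m` odd; variables `ξ = X 0`, `ζ = X 1`, `h = X 2`, `φ = X 3`. -/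

abbrev Tpre : Type := MvPolynomial (Fin 4) ℤ

def TI (m : ℕ) : Ideal Tpre :=
  Ideal.span {X 0 * X 1 - 1, X 2 ^ m - 2 * X 3,
    X 3 ^ 2 - C (if Even m then (1 : ℤ) else 0) * X 2 ^ m * X 3}

abbrev T (m : ℕ) : Type := Tpre ⧸ TI m

def ξT (m : ℕ) : T m := Ideal.Quotient.mk (TI m) (X 0)
def ζT (m : ℕ) : T m := Ideal.Quotient.mk (TI m) (X 1)
def hT (m : ℕ) : T m := Ideal.Quotient.mk (TI m) (X 2)
def φT (m : ℕ) : T m := Ideal.Quotient.mk (TI m) (X 3)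

/- Statement 18 (Claim in the proof of Theorem 5.4, case `n = 2m-1`):
for the ring hom `Φ : A → T` determined by `ε ↦ 0`, `τ ↦ ξ²`, `σ ↦ ζ²`,
`h ↦ h`, `x ↦ 0`, one has `ker Φ = ⟨ε⟩ + J`. -/
abbrev L : Type := AddMonoidAlgebra ℚ ℚ

def sg (a : ℚ) (b : ℚ) : L := AddMonoidAlgebra.single a b


-- nilpotence of hT
lemma hT_pow (m : ℕ) : hT m ^ (2 * m) = 0 := by
  rw [hT, ← map_pow, Ideal.Quotient.eq_zero_iff_mem]
  set c : ℤ := if Even m then (1 : ℤ) else 0 with hc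
  have h1 : (X 0 * X 1 - 1 : Tpre) ∈ TI m := Ideal.subset_span (by simp)
  have h2 : (X 2 ^ m - 2 * X 3 : Tpre) ∈ TI m := Ideal.subset_span (by simp)
  have h3 : (X 3 ^ 2 - C c * X 2 ^ m * X 3 : Tpre) ∈ TI m := Ideal.subset_span (by simp [hc])
  by_cases hev : Even m
  · have hc1 : c = 1 := by simp [hc, hev]
    have key : (X 2 ^ (2 * m) : Tpre) =
        (X 2 ^ m - 2 * X 3) * (X 2 ^ m - 2 * X 3) + (-4) * (X 3 ^ 2 - C c * X 2 ^ m * X 3) := by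
      rw [hc1]; simp only [map_one]; ring
    rw [key]
    exact Ideal.add_mem _ (Ideal.mul_mem_left _ _ h2) (Ideal.mul_mem_left _ _ h3)
  · have hc0 : c = 0 := by simp [hc, hev]
    have key : (X 2 ^ (2 * m) : Tpre) =
        (X 2 ^ m + 2 * X 3) * (X 2 ^ m - 2 * X 3) + 4 * (X 3 ^ 2 - C c * X 2 ^ m * X 3) := by
      rw [hc0]; simp only [map_zero]; ring
    rw [key]
    exact Ideal.add_mem _ (Ideal.mul_mem_left _ _ h2) (Ideal.mul_mem_left _ _ h3)

def ψ : Polynomial ℤ →+* L :=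
  (AddMonoidAlgebra.mapDomainRingHom ℚ (Nat.castAddMonoidHom ℚ)).comp
    ((Polynomial.toFinsuppIso ℚ).toRingHom.comp (Polynomial.mapRingHom (Int.castRingHom ℚ)))

lemma ψ_inj : Function.Injective ψ := by
  have h1 : Function.Injective (AddMonoidAlgebra.mapDomainRingHom ℚ (Nat.castAddMonoidHom ℚ)) := by
    have := Finsupp.mapDomain_injective (M := ℚ) (Nat.cast_injective (R := ℚ))
    intro a b hab
    exact AddMonoidAlgebra.mapDomain_injective (R := ℚ) (Nat.cast_injective (R := ℚ)) hab
  have h2 : Function.Injective (Polynomial.mapRingHom (Int.castRingHom ℚ)) :=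
    Polynomial.map_injective (Int.castRingHom ℚ) Int.cast_injective
  exact h1.comp ((Polynomial.toFinsuppIso ℚ).injective.comp h2)

lemma ψ_X : ψ Polynomial.X = AddMonoidAlgebra.single (1:ℚ) (1:ℚ) := by
  simp [ψ, Polynomial.toFinsuppIso, Polynomial.toFinsupp_X]

lemma aeval_eq_ψ : ((Polynomial.aeval (AddMonoidAlgebra.single (1:ℚ) (1:ℚ)) :
    Polynomial ℤ →ₐ[ℤ] L) : Polynomial ℤ →+* L) = ψ := by
  apply Polynomial.ringHom_ext
  · intro a
    rw [show ψ (Polynomial.C a) = (ψ.comp Polynomial.C) a from rfl, eq_intCast]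
    simp
  · show Polynomial.aeval _ Polynomial.X = _
    rw [ψ_X]; simp

lemma inj_lemma (f : Polynomial ℤ)
    (hf : Polynomial.aeval (AddMonoidAlgebra.single (1:ℚ) (1:ℚ)) f = (0:L)) : f = 0 := by
  apply ψ_inj
  rw [← aeval_eq_ψ]
  simpa using hf


def SI (m : ℕ) : Ideal (Polynomial L) := Ideal.span {Polynomial.X ^ (2 * m)}
abbrev SQ (m : ℕ) : Type := Polynomial L ⧸ SI m

def shalf : L := sg 0 (1/2)

def w : Fin 4 → Polynomial L :=
  ![Polynomial.C (sg (1/2) 1), Polynomial.C (sg (-(1/2)) 1), Polynomial.X,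
    Polynomial.C shalf * Polynomial.X ^ 1]

-- w depends on m, make it a function
def wm (m : ℕ) : Fin 4 → Polynomial L :=
  ![Polynomial.C (sg (1/2) 1), Polynomial.C (sg (-(1/2)) 1), Polynomial.X,
    Polynomial.C shalf * Polynomial.X ^ m]

lemma two_shalf : (2 : L) * shalf = 1 := by
  rw [two_mul, shalf, sg, ← AddMonoidAlgebra.single_add]
  norm_num
  exact (AddMonoidAlgebra.one_def).symm

def ρ0 (m : ℕ) : Tpre →+* SQ m :=
  (Ideal.Quotient.mk (SI m)).comp (MvPolynomial.aeval (wm m)).toRingHom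

lemma ρ0_ker (m : ℕ) : TI m ≤ RingHom.ker (ρ0 m) := by
  rw [TI, Ideal.span_le]
  have step : ∀ p : Tpre, (MvPolynomial.aeval (wm m)) p ∈ SI m → p ∈ RingHom.ker (ρ0 m) := by
    intro p hp
    rw [RingHom.mem_ker, ρ0, RingHom.comp_apply]
    exact Ideal.Quotient.eq_zero_iff_mem.mpr hp
  rintro p (rfl | rfl | rfl) <;> apply step <;>
    simp only [map_sub, map_mul, map_pow, map_one, map_ofNat, aeval_X, MvPolynomial.aeval_C, wm,
      Matrix.cons_val_zero, Matrix.cons_val_one, Matrix.head_cons,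
      Matrix.cons_val_two, Matrix.cons_val_three, Matrix.tail_cons, Matrix.cons_val_fin_one]
  · have e1 : (Polynomial.C (sg (1/2) 1) * Polynomial.C (sg (-(1/2)) 1) - 1 : Polynomial L) = 0 := by
      rw [← map_mul, sg, sg, AddMonoidAlgebra.single_mul_single]
      norm_num
      rw [← AddMonoidAlgebra.one_def, map_one, sub_self]
    rw [e1]; exact zero_mem _
  · have e2 : (Polynomial.X ^ m - 2 * (Polynomial.C shalf * Polynomial.X ^ m) : Polynomial L) = 0 := by
      have h2C : (2 : Polynomial L) * Polynomial.C shalf = 1 := by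
        rw [two_mul, ← map_add, ← two_mul, two_shalf, map_one]
      rw [show (2 : Polynomial L) * (Polynomial.C shalf * Polynomial.X ^ m)
            = (2 * Polynomial.C shalf) * Polynomial.X ^ m by ring, h2C, one_mul, sub_self]
    rw [e2]; exact zero_mem _
  · rw [SI, Ideal.mem_span_singleton]
    refine ⟨Polynomial.C shalf ^ 2
      - (algebraMap ℤ (Polynomial L)) (if Even m then 1 else 0) * Polynomial.C shalf, ?_⟩
    ring

def ρ (m : ℕ) : T m →+* SQ m := Ideal.Quotient.lift (TI m) (ρ0 m) (fun _ ha => RingHom.mem_ker.mp (ρ0_ker m ha))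

lemma ρ_hT (m : ℕ) : ρ m (hT m) = Ideal.Quotient.mk (SI m) Polynomial.X := by
  rw [ρ, hT, Ideal.Quotient.lift_mk, ρ0, RingHom.comp_apply]
  simp [wm]

lemma ρ_ξ_sq (m : ℕ) : ρ m (ξT m ^ 2) = Ideal.Quotient.mk (SI m) (Polynomial.C (sg 1 1)) := by
  have h1 : ρ m (ξT m) = Ideal.Quotient.mk (SI m) (Polynomial.C (sg (1/2) 1)) := by
    rw [ρ, ξT, Ideal.Quotient.lift_mk, ρ0, RingHom.comp_apply]
    simp [wm]
  rw [pow_two, map_mul, h1, ← map_mul, ← map_mul, sg, sg, AddMonoidAlgebra.single_mul_single]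
  norm_num [sg]

lemma key (m : ℕ) (hm : 1 ≤ m) (g : ℕ → Polynomial ℤ)
    (hz : (∑ i ∈ Finset.range (2*m), Polynomial.aeval
        (Ideal.Quotient.mk (SI m) (Polynomial.C (sg 1 1))) (g i)
        * (Ideal.Quotient.mk (SI m) Polynomial.X)^i) = 0) :
    ∀ i ∈ Finset.range (2*m), g i = 0 := by
  set β : L →ₐ[ℤ] SQ m :=
    ((Ideal.Quotient.mk (SI m)).comp (Polynomial.C : L →+* Polynomial L)).toIntAlgHom with hβ
  have hβ' : ∀ y : L, β y = Ideal.Quotient.mk (SI m) (Polynomial.C y) := fun y => rfl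
  set u : L := sg 1 1 with hu
  set P : Polynomial L := ∑ i ∈ Finset.range (2*m),
    Polynomial.C (Polynomial.aeval u (g i)) * Polynomial.X ^ i with hP
  have hzP : Ideal.Quotient.mk (SI m) P = 0 := by
    rw [hP, map_sum]
    rw [← hz]
    apply Finset.sum_congr rfl
    intro i _
    rw [map_mul, map_pow, ← hβ' _, ← Polynomial.aeval_algHom_apply, hβ']
  have hPmem : P ∈ SI m := Ideal.Quotient.eq_zero_iff_mem.mp hzP
  rw [SI, Ideal.mem_span_singleton] at hPmem
  have hP0 : P = 0 := by
    by_contra hne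
    have hd : (Polynomial.X : Polynomial L) ^ (2*m) ≠ 0 := by
      exact pow_ne_zero _ Polynomial.X_ne_zero
    have := Polynomial.natDegree_le_of_dvd hPmem hne
    rw [Polynomial.natDegree_X_pow] at this
    have hdeg : P.natDegree ≤ 2*m - 1 := by
      apply Polynomial.natDegree_sum_le_of_forall_le
      intro i hi
      calc (Polynomial.C (Polynomial.aeval u (g i)) * Polynomial.X ^ i).natDegree
          ≤ (Polynomial.X ^ i : Polynomial L).natDegree := Polynomial.natDegree_C_mul_le _ _
        _ = i := Polynomial.natDegree_X_pow i
        _ ≤ 2*m - 1 := by have := Finset.mem_range.mp hi; omega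
    omega
  intro i hi
  have hc : Polynomial.aeval u (g i) = 0 := by
    have := congrArg (fun q => Polynomial.coeff q i) hP0
    simp only [hP, Polynomial.finset_sum_coeff, Polynomial.coeff_C_mul,
      Polynomial.coeff_X_pow, Polynomial.coeff_zero] at this
    rw [Finset.sum_eq_single i] at this
    · simpa using this
    · intro b _ hb; simp [Ne.symm hb]
    · intro hni; exact absurd hi hni
  rw [hu, sg] at hc
  exact inj_lemma (g i) hc

lemma tau_sigma : τ * σ = 1 := by
  rw [τ, σ, ← map_mul, ← sub_eq_zero, ← map_one (Ideal.Quotient.mk AI), ← map_sub,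
    Ideal.Quotient.eq_zero_iff_mem]
  exact Ideal.subset_span (by simp)

def K (m : ℕ) : Ideal A := Ideal.span {ε, x, h ^ (2*m)}

lemma eps_mem (m : ℕ) : ε ∈ K m := Ideal.subset_span (by simp)
lemma x_mem (m : ℕ) : x ∈ K m := Ideal.subset_span (by simp)
lemma hpow_mem (m : ℕ) : h ^ (2*m) ∈ K m := Ideal.subset_span (by simp)

lemma X_cases (n : Fin 5) : (Ideal.Quotient.mk AI) (X n) = ε ∨ (Ideal.Quotient.mk AI) (X n) = τ
    ∨ (Ideal.Quotient.mk AI) (X n) = σ ∨ (Ideal.Quotient.mk AI) (X n) = h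
    ∨ (Ideal.Quotient.mk AI) (X n) = x := by
  fin_cases n
  · exact Or.inl rfl
  · exact Or.inr (Or.inl rfl)
  · exact Or.inr (Or.inr (Or.inl rfl))
  · exact Or.inr (Or.inr (Or.inr (Or.inl rfl)))
  · exact Or.inr (Or.inr (Or.inr (Or.inr rfl)))

lemma NF (m : ℕ) (hm : 1 ≤ m) (a : A) : ∃ (N : ℕ) (g : ℕ → Polynomial ℤ),
    τ ^ N * a - (∑ i ∈ Finset.range (2*m), Polynomial.aeval τ (g i) * h ^ i) ∈ K m := by
  obtain ⟨p, rfl⟩ := Ideal.Quotient.mk_surjective a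
  induction p using MvPolynomial.induction_on with
  | C r =>
    refine ⟨0, fun i => if i = 0 then Polynomial.C r else 0, ?_⟩
    have hsum : (∑ i ∈ Finset.range (2*m),
        Polynomial.aeval τ (if i = 0 then Polynomial.C r else 0) * h ^ i)
        = algebraMap ℤ A r := by
      rw [Finset.sum_eq_single_of_mem 0 (Finset.mem_range.mpr (by omega))]
      · simp
      · intro b _ hb; simp [hb]
    rw [hsum, pow_zero, one_mul]
    have : (Ideal.Quotient.mk AI) (MvPolynomial.C r) = algebraMap ℤ A r := by
      rw [← MvPolynomial.algebraMap_eq]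
      simp [eq_intCast, map_intCast]
    rw [this, sub_self]
    exact zero_mem _
  | add p q ih₁ ih₂ =>
    obtain ⟨N₁, g₁, hD₁⟩ := ih₁
    obtain ⟨N₂, g₂, hD₂⟩ := ih₂
    refine ⟨N₁ + N₂, fun i => Polynomial.X ^ N₂ * g₁ i + Polynomial.X ^ N₁ * g₂ i, ?_⟩
    have hsum : (∑ i ∈ Finset.range (2*m),
        Polynomial.aeval τ (Polynomial.X ^ N₂ * g₁ i + Polynomial.X ^ N₁ * g₂ i) * h ^ i)
        = τ ^ N₂ * (∑ i ∈ Finset.range (2*m), Polynomial.aeval τ (g₁ i) * h ^ i)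
          + τ ^ N₁ * (∑ i ∈ Finset.range (2*m), Polynomial.aeval τ (g₂ i) * h ^ i) := by
      rw [Finset.mul_sum, Finset.mul_sum, ← Finset.sum_add_distrib]
      exact Finset.sum_congr rfl fun i _ => by
        simp only [map_add, map_mul, map_pow, Polynomial.aeval_X]; ring
    have heq : τ ^ (N₁ + N₂) * ((Ideal.Quotient.mk AI) (p + q))
        - (∑ i ∈ Finset.range (2*m),
            Polynomial.aeval τ (Polynomial.X ^ N₂ * g₁ i + Polynomial.X ^ N₁ * g₂ i) * h ^ i)
        = τ ^ N₂ * (τ ^ N₁ * (Ideal.Quotient.mk AI p)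
            - (∑ i ∈ Finset.range (2*m), Polynomial.aeval τ (g₁ i) * h ^ i))
          + τ ^ N₁ * (τ ^ N₂ * (Ideal.Quotient.mk AI q)
            - (∑ i ∈ Finset.range (2*m), Polynomial.aeval τ (g₂ i) * h ^ i)) := by
      rw [hsum, map_add]; ring
    rw [heq]
    exact Ideal.add_mem _ (Ideal.mul_mem_left _ _ hD₁) (Ideal.mul_mem_left _ _ hD₂)
  | mul_X p n ih =>
    obtain ⟨N, g, hD⟩ := ih
    rw [map_mul]
    set a := (Ideal.Quotient.mk AI) p with ha
    rcases X_cases n with hXn | hXn | hXn | hXn | hXn <;> rw [hXn]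
    · -- ε
      refine ⟨0, fun _ => 0, ?_⟩
      simp only [map_zero, zero_mul, Finset.sum_const_zero, pow_zero, one_mul, sub_zero]
      exact Ideal.mul_mem_left _ _ (eps_mem m)
    · -- τ
      refine ⟨N, fun i => Polynomial.X * g i, ?_⟩
      have hsum : (∑ i ∈ Finset.range (2*m), Polynomial.aeval τ (Polynomial.X * g i) * h ^ i)
          = τ * (∑ i ∈ Finset.range (2*m), Polynomial.aeval τ (g i) * h ^ i) := by
        rw [Finset.mul_sum]
        exact Finset.sum_congr rfl fun i _ => by
          simp only [map_mul, Polynomial.aeval_X]; ring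
      have heq : τ ^ N * (a * τ)
          - (∑ i ∈ Finset.range (2*m), Polynomial.aeval τ (Polynomial.X * g i) * h ^ i)
          = τ * (τ ^ N * a - (∑ i ∈ Finset.range (2*m), Polynomial.aeval τ (g i) * h ^ i)) := by
        rw [hsum]; ring
      rw [heq]
      exact Ideal.mul_mem_left _ _ hD
    · -- σ
      refine ⟨N + 1, g, ?_⟩
      have heq : τ ^ (N+1) * (a * σ) = τ ^ N * a := by
        rw [pow_succ]
        linear_combination (τ ^ N * a) * tau_sigma
      rw [heq]
      exact hD
    · -- h
      refine ⟨N, fun i => if i = 0 then 0 else g (i - 1), ?_⟩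
      obtain ⟨n', hn'⟩ : ∃ n', 2*m = n' + 1 := ⟨2*m - 1, by omega⟩
      have hS' : (∑ i ∈ Finset.range (2*m),
          Polynomial.aeval τ (if i = 0 then 0 else g (i - 1)) * h ^ i)
          = ∑ i ∈ Finset.range n', Polynomial.aeval τ (g i) * h ^ (i+1) := by
        rw [hn', Finset.sum_range_succ']
        simp
      have hsplit : (∑ i ∈ Finset.range (2*m), Polynomial.aeval τ (g i) * h ^ i) * h
          = (∑ i ∈ Finset.range n', Polynomial.aeval τ (g i) * h ^ (i+1))
            + Polynomial.aeval τ (g n') * h ^ (2*m) := by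
      -- Σ_{i<n'+1} a_i h^i * h = Σ_{i<n'} a_i h^{i+1} + a_{n'} h^{n'+1}
        rw [hn', Finset.sum_range_succ, add_mul, Finset.sum_mul]
        congr 1
        · exact Finset.sum_congr rfl fun i _ => by ring
        · ring
      have heq : τ ^ N * (a * h)
          - (∑ i ∈ Finset.range (2*m),
              Polynomial.aeval τ (if i = 0 then 0 else g (i - 1)) * h ^ i)
          = (τ ^ N * a - (∑ i ∈ Finset.range (2*m), Polynomial.aeval τ (g i) * h ^ i)) * h
            + Polynomial.aeval τ (g n') * h ^ (2*m) := by
        rw [hS', sub_mul, hsplit]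
        ring
      rw [heq]
      exact Ideal.add_mem _ (Ideal.mul_mem_right _ _ hD)
        (Ideal.mul_mem_left _ _ (hpow_mem m))
    · -- x
      refine ⟨0, fun _ => 0, ?_⟩
      simp only [map_zero, zero_mul, Finset.sum_const_zero, pow_zero, one_mul, sub_zero]
      exact Ideal.mul_mem_left _ _ (x_mem m)


lemma f_mem (k : ℕ) : f k ∈ Ideal.span {ε} := by
  rw [f]
  apply Ideal.sum_mem
  intro b _
  rw [Ideal.mem_span_singleton]
  exact ⟨(Nat.choose (k - b) b : A) * ε ^ (2*(k - 2*b)) * τ ^ b * h ^ (2*b), by ring⟩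

lemma span_eps_le (m : ℕ) : Ideal.span {ε} ≤ K m := by
  rw [Ideal.span_le]; simp [eps_mem m]

lemma RHS_eq (m : ℕ) : Ideal.span {ε}
    + Ideal.span {τ ^ m * x - f (m - 1), f m, h * x, h ^ (2 * m)} = K m := by
  rw [Submodule.add_eq_sup]
  apply le_antisymm
  · apply sup_le (span_eps_le m)
    rw [Ideal.span_le]
    rintro p (rfl | rfl | rfl | rfl)
    · exact Ideal.sub_mem _ (Ideal.mul_mem_left _ _ (x_mem m)) (span_eps_le m (f_mem (m-1)))
    · exact span_eps_le m (f_mem m)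
    · exact Ideal.mul_mem_left _ _ (x_mem m)
    · exact hpow_mem m
  · rw [K, Ideal.span_le]
    rintro p (rfl | rfl | rfl)
    · exact Ideal.mem_sup_left (Ideal.subset_span rfl)
    · -- x
      have hts : σ ^ m * τ ^ m = 1 := by
        rw [← mul_pow, mul_comm σ τ, tau_sigma, one_pow]
      have hx : x = σ ^ m * (τ ^ m * x - f (m - 1)) + σ ^ m * f (m - 1) := by
        linear_combination (-x) * hts
      have hm1 : τ ^ m * x - f (m - 1)
          ∈ Ideal.span {τ ^ m * x - f (m - 1), f m, h * x, h ^ (2 * m)} :=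
        Ideal.subset_span (Set.mem_insert _ _)
      have hmem := Ideal.add_mem _
        (Submodule.mem_sup_right (S := Ideal.span {ε}) (Ideal.mul_mem_left _ (σ ^ m) hm1))
        (Submodule.mem_sup_left
          (T := Ideal.span {τ ^ m * x - f (m - 1), f m, h * x, h ^ (2 * m)})
          (Ideal.mul_mem_left _ (σ ^ m) (f_mem (m-1))))
      rwa [← hx] at hmem
    · exact Ideal.mem_sup_right (Ideal.subset_span (by simp))

theorem ker_eq_eps_plus_J_odd (m : ℕ) (hm : 1 ≤ m)
    (Φ : A →+* T m)
    (hΦε : Φ ε = 0) (hΦτ : Φ τ = ξT m ^ 2) (hΦσ : Φ σ = ζT m ^ 2)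
    (hΦh : Φ h = hT m) (hΦx : Φ x = 0) :
    RingHom.ker Φ =
      Ideal.span {ε} + Ideal.span {τ ^ m * x - f (m - 1), f m, h * x, h ^ (2 * m)} := by
  rw [RHS_eq m]
  have hKker : K m ≤ RingHom.ker Φ := by
    rw [K, Ideal.span_le]
    rintro p (rfl | rfl | rfl) <;> rw [SetLike.mem_coe, RingHom.mem_ker]
    · exact hΦε
    · exact hΦx
    · rw [map_pow, hΦh, hT_pow m]
  apply le_antisymm _ hKker
  intro a ha
  rw [RingHom.mem_ker] at ha
  obtain ⟨N, g, hD⟩ := NF m hm a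
  set Sg : A := ∑ i ∈ Finset.range (2*m), Polynomial.aeval τ (g i) * h ^ i with hSg
  have hΦSg : Φ Sg = 0 := by
    have h1 : Φ (τ ^ N * a - Sg) = 0 := hKker hD
    have h2 : Φ (τ ^ N * a) = 0 := by rw [map_mul, ha, mul_zero]
    rw [map_sub, h2, zero_sub, neg_eq_zero] at h1
    exact h1
  have hρ : (∑ i ∈ Finset.range (2*m), Polynomial.aeval
      (Ideal.Quotient.mk (SI m) (Polynomial.C (sg 1 1))) (g i)
      * (Ideal.Quotient.mk (SI m) Polynomial.X) ^ i) = 0 := by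
    have e1 : ∀ i, Polynomial.aeval (Ideal.Quotient.mk (SI m) (Polynomial.C (sg 1 1))) (g i)
        = ρ m (Φ (Polynomial.aeval τ (g i))) := by
      intro i
      rw [show Φ (Polynomial.aeval τ (g i)) = Φ.toIntAlgHom (Polynomial.aeval τ (g i)) from rfl,
        ← Polynomial.aeval_algHom_apply, show Φ.toIntAlgHom τ = Φ τ from rfl, hΦτ,
        show ρ m (Polynomial.aeval (ξT m ^ 2) (g i))
          = (ρ m).toIntAlgHom (Polynomial.aeval (ξT m ^ 2) (g i)) from rfl,
        ← Polynomial.aeval_algHom_apply, show (ρ m).toIntAlgHom (ξT m ^ 2) = ρ m (ξT m ^ 2) from rfl,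
        ρ_ξ_sq m]
    have e2 : (∑ i ∈ Finset.range (2*m), Polynomial.aeval
        (Ideal.Quotient.mk (SI m) (Polynomial.C (sg 1 1))) (g i)
        * (Ideal.Quotient.mk (SI m) Polynomial.X) ^ i) = ρ m (Φ Sg) := by
      rw [hSg, map_sum, map_sum]
      refine Finset.sum_congr rfl fun i _ => ?_
      rw [map_mul, map_mul, map_pow, map_pow, hΦh, ρ_hT m, e1 i]
    rw [e2, hΦSg, map_zero]
  have hg : ∀ i ∈ Finset.range (2*m), g i = 0 := key m hm g hρ
  have hSg0 : Sg = 0 := by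
    rw [hSg]
    apply Finset.sum_eq_zero
    intro i hi
    rw [hg i hi, map_zero, zero_mul]
  rw [hSg0, sub_zero] at hD
  have hts : σ ^ N * τ ^ N = 1 := by
    rw [← mul_pow, mul_comm σ τ, tau_sigma, one_pow]
  have : a = σ ^ N * (τ ^ N * a) := by rw [← mul_assoc, hts, one_mul]
  rw [this]
  exact Ideal.mul_mem_left _ _ hD

end
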